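/- If x, y, z are nonempty strings of symbols over an alphabet Σ with f̄(x,z) < 1/2 and f̄(y,z) < 1/2, then f̄(x,y) ≤ ((|x|+|z|)/(|x|+|y|))·f̄(x,z) + ((|z|+|y|)/(|x|+|y|))·f̄(z,y), and moreover f̄(x,y) ≤ f̄(x,z) + f̄(z,y) + 8·f̄(x,z)·f̄(z,y). -/

import Mathlib

/-- A match between two strings `a` and `b`: a finite set of pairs of (0-based) indices,
strictly increasing in both coordinates simultaneously, matching equal symbols. -/
def IsMatch {α : Type*} (a b : List α) (M : Finset (ℕ × ℕ)) : Prop :=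
  (∀ p ∈ M, p.1 < a.length ∧ p.2 < b.length ∧ a[p.1]? = b[p.2]?) ∧
  (∀ p ∈ M, ∀ q ∈ M, (p.1 < q.1 ↔ p.2 < q.2))

/-- The maximal cardinality of a match between `a` and `b`. -/
noncomputable def maxMatch {α : Type*} (a b : List α) : ℕ :=
  sSup {r : ℕ | ∃ M : Finset (ℕ × ℕ), IsMatch a b M ∧ M.card = r}

/-- The `f̄` distance between two strings:
`f̄(a,b) = 1 - 2 · max{|M| : M a match between a and b} / (|a| + |b|)`. -/
noncomputable def fbar {α : Type*} (a b : List α) : ℝ :=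
  1 - 2 * (maxMatch a b : ℝ) / ((a.length : ℝ) + (b.length : ℝ))

section FbarAux

variable {α : Type*}

lemma injOn_fst {a b : List α} {M : Finset (ℕ × ℕ)} (h : IsMatch a b M) :
    Set.InjOn Prod.fst (M : Set (ℕ × ℕ)) := by
  intro p hp q hq hpq
  have h2 := h.2 p hp q hq
  have h3 := h.2 q hq p hp
  have : p.2 = q.2 := by
    rcases lt_trichotomy p.2 q.2 with hc | hc | hc
    · exact absurd (h2.mpr hc) (by omega)
    · exact hc
    · exact absurd (h3.mpr hc) (by omega)
  exact Prod.ext hpq this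

lemma injOn_snd {a b : List α} {M : Finset (ℕ × ℕ)} (h : IsMatch a b M) :
    Set.InjOn Prod.snd (M : Set (ℕ × ℕ)) := by
  intro p hp q hq hpq
  have h2 := h.2 p hp q hq
  have h3 := h.2 q hq p hp
  have : p.1 = q.1 := by
    rcases lt_trichotomy p.1 q.1 with hc | hc | hc
    · exact absurd (h2.mp hc) (by omega)
    · exact hc
    · exact absurd (h3.mp hc) (by omega)
  exact Prod.ext this hpq

lemma card_le_left {a b : List α} {M : Finset (ℕ × ℕ)} (h : IsMatch a b M) :
    M.card ≤ a.length := by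
  calc M.card = (M.image Prod.fst).card := (Finset.card_image_of_injOn (injOn_fst h)).symm
    _ ≤ (Finset.range a.length).card := by
        apply Finset.card_le_card
        intro i hi
        obtain ⟨p, hp, rfl⟩ := Finset.mem_image.mp hi
        exact Finset.mem_range.mpr (h.1 p hp).1
    _ = a.length := Finset.card_range _

lemma card_le_right {a b : List α} {M : Finset (ℕ × ℕ)} (h : IsMatch a b M) :
    M.card ≤ b.length := by
  calc M.card = (M.image Prod.snd).card := (Finset.card_image_of_injOn (injOn_snd h)).symm
    _ ≤ (Finset.range b.length).card := by
        apply Finset.card_le_card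
        intro i hi
        obtain ⟨p, hp, rfl⟩ := Finset.mem_image.mp hi
        exact Finset.mem_range.mpr (h.1 p hp).2.1
    _ = b.length := Finset.card_range _

lemma isMatch_empty (a b : List α) : IsMatch a b ∅ := ⟨by simp, by simp⟩

lemma matchSet_nonempty (a b : List α) :
    {r : ℕ | ∃ M : Finset (ℕ × ℕ), IsMatch a b M ∧ M.card = r}.Nonempty :=
  ⟨0, ∅, isMatch_empty a b, Finset.card_empty⟩

lemma matchSet_bdd (a b : List α) :
    BddAbove {r : ℕ | ∃ M : Finset (ℕ × ℕ), IsMatch a b M ∧ M.card = r} :=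
  ⟨a.length, by rintro r ⟨M, hM, rfl⟩; exact card_le_left hM⟩

lemma maxMatch_spec (a b : List α) :
    ∃ M : Finset (ℕ × ℕ), IsMatch a b M ∧ M.card = maxMatch a b :=
  Nat.sSup_mem (matchSet_nonempty a b) (matchSet_bdd a b)

lemma le_maxMatch {a b : List α} {M : Finset (ℕ × ℕ)} (h : IsMatch a b M) :
    M.card ≤ maxMatch a b :=
  le_csSup (matchSet_bdd a b) ⟨M, h, rfl⟩

lemma isMatch_swap {a b : List α} {M : Finset (ℕ × ℕ)} (h : IsMatch a b M) :
    IsMatch b a (M.image Prod.swap) := by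
  constructor
  · intro p hp
    obtain ⟨q, hq, rfl⟩ := Finset.mem_image.mp hp
    obtain ⟨h1, h2, h3⟩ := h.1 q hq
    exact ⟨h2, h1, h3.symm⟩
  · intro p hp q hq
    obtain ⟨p', hp', rfl⟩ := Finset.mem_image.mp hp
    obtain ⟨q', hq', rfl⟩ := Finset.mem_image.mp hq
    exact (h.2 p' hp' q' hq').symm

lemma maxMatch_comm (a b : List α) : maxMatch a b = maxMatch b a := by
  have key : ∀ (a b : List α), maxMatch a b ≤ maxMatch b a := by
    intro a b
    obtain ⟨M, hM, hc⟩ := maxMatch_spec a b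
    calc maxMatch a b = M.card := hc.symm
      _ = (M.image Prod.swap).card :=
          (Finset.card_image_of_injective _ Prod.swap_injective).symm
      _ ≤ maxMatch b a := le_maxMatch (isMatch_swap hM)
  exact le_antisymm (key a b) (key b a)

lemma comp_match {x y z : List α} {M1 M2 : Finset (ℕ × ℕ)}
    (h1 : IsMatch x z M1) (h2 : IsMatch y z M2) :
    ∃ M3 : Finset (ℕ × ℕ), IsMatch x y M3 ∧
      M1.card + M2.card ≤ M3.card + z.length := by
  classical
  set M3 : Finset (ℕ × ℕ) :=
    ((M1 ×ˢ M2).filter (fun pq => pq.1.2 = pq.2.2)).image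
      (fun pq => (pq.1.1, pq.2.1)) with hM3
  have mem3 : ∀ r ∈ M3, ∃ p ∈ M1, ∃ q ∈ M2, p.2 = q.2 ∧ r = (p.1, q.1) := by
    intro r hr
    obtain ⟨pq, hpq, hr⟩ := Finset.mem_image.mp hr
    obtain ⟨hmem, heq⟩ := Finset.mem_filter.mp hpq
    obtain ⟨hp, hq⟩ := Finset.mem_product.mp hmem
    exact ⟨pq.1, hp, pq.2, hq, heq, hr.symm⟩
  have hMatch : IsMatch x y M3 := by
    constructor
    · intro r hr
      obtain ⟨p, hp, q, hq, hk, rfl⟩ := mem3 r hr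
      obtain ⟨hp1, hp2, hp3⟩ := h1.1 p hp
      obtain ⟨hq1, hq2, hq3⟩ := h2.1 q hq
      refine ⟨hp1, hq1, ?_⟩
      rw [hp3, hk, ← hq3]
    · intro r hr s hs
      obtain ⟨p, hp, q, hq, hk, rfl⟩ := mem3 r hr
      obtain ⟨p', hp', q', hq', hk', rfl⟩ := mem3 s hs
      have e1 := h1.2 p hp p' hp'
      have e2 := h2.2 q hq q' hq'
      simp only []
      rw [e1, hk, hk', e2]
  refine ⟨M3, hMatch, ?_⟩
  set K1 := M1.image Prod.snd with hK1
  set K2 := M2.image Prod.snd with hK2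
  have hc1 : K1.card = M1.card := Finset.card_image_of_injOn (injOn_snd h1)
  have hc2 : K2.card = M2.card := Finset.card_image_of_injOn (injOn_snd h2)
  have hunion : (K1 ∪ K2).card ≤ z.length := by
    calc (K1 ∪ K2).card ≤ (Finset.range z.length).card := by
          apply Finset.card_le_card
          intro k hk
          rcases Finset.mem_union.mp hk with hk | hk
          · obtain ⟨p, hp, rfl⟩ := Finset.mem_image.mp hk
            exact Finset.mem_range.mpr (h1.1 p hp).2.1
          · obtain ⟨q, hq, rfl⟩ := Finset.mem_image.mp hk
            exact Finset.mem_range.mpr (h2.1 q hq).2.1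
      _ = z.length := Finset.card_range _
  have hinter : (K1 ∩ K2).card ≤ M3.card := by
    apply Finset.card_le_card_of_injOn
      (fun k => ((M1.filter (fun p => p.2 = k)).sup Prod.fst,
                 (M2.filter (fun q => q.2 = k)).sup Prod.fst))
    · intro k hk
      obtain ⟨hk1, hk2⟩ := Finset.mem_inter.mp hk
      obtain ⟨p, hp, hpk⟩ := Finset.mem_image.mp hk1
      obtain ⟨q, hq, hqk⟩ := Finset.mem_image.mp hk2
      have f1 : M1.filter (fun r => r.2 = k) = {p} := by
        apply Finset.eq_singleton_iff_unique_mem.mpr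
        refine ⟨Finset.mem_filter.mpr ⟨hp, hpk⟩, ?_⟩
        intro r hr
        obtain ⟨hr1, hr2⟩ := Finset.mem_filter.mp hr
        exact injOn_snd h1 hr1 hp (by rw [hr2, hpk])
      have f2 : M2.filter (fun r => r.2 = k) = {q} := by
        apply Finset.eq_singleton_iff_unique_mem.mpr
        refine ⟨Finset.mem_filter.mpr ⟨hq, hqk⟩, ?_⟩
        intro r hr
        obtain ⟨hr1, hr2⟩ := Finset.mem_filter.mp hr
        exact injOn_snd h2 hr1 hq (by rw [hr2, hqk])
      simp only [Finset.mem_coe]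
      rw [f1, f2, Finset.sup_singleton, Finset.sup_singleton]
      apply Finset.mem_image.mpr
      refine ⟨(p, q), Finset.mem_filter.mpr ⟨Finset.mem_product.mpr ⟨hp, hq⟩, ?_⟩, rfl⟩
      simp only []
      rw [hpk, hqk]
    · intro k hk k' hk' heq
      obtain ⟨hk1, hk2⟩ := Finset.mem_inter.mp (by exact hk)
      obtain ⟨hk1', hk2'⟩ := Finset.mem_inter.mp (by exact hk')
      obtain ⟨p, hp, hpk⟩ := Finset.mem_image.mp hk1
      obtain ⟨p', hp', hpk'⟩ := Finset.mem_image.mp hk1'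
      obtain ⟨q, hq, hqk⟩ := Finset.mem_image.mp hk2
      obtain ⟨q', hq', hqk'⟩ := Finset.mem_image.mp hk2'
      have f1 : M1.filter (fun r => r.2 = k) = {p} := by
        apply Finset.eq_singleton_iff_unique_mem.mpr
        refine ⟨Finset.mem_filter.mpr ⟨hp, hpk⟩, ?_⟩
        intro r hr
        obtain ⟨hr1, hr2⟩ := Finset.mem_filter.mp hr
        exact injOn_snd h1 hr1 hp (by rw [hr2, hpk])
      have f1' : M1.filter (fun r => r.2 = k') = {p'} := by
        apply Finset.eq_singleton_iff_unique_mem.mpr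
        refine ⟨Finset.mem_filter.mpr ⟨hp', hpk'⟩, ?_⟩
        intro r hr
        obtain ⟨hr1, hr2⟩ := Finset.mem_filter.mp hr
        exact injOn_snd h1 hr1 hp' (by rw [hr2, hpk'])
      dsimp only at heq
      rw [f1, f1'] at heq
      simp only [Finset.sup_singleton, Prod.mk.injEq] at heq
      have : p = p' := injOn_fst h1 hp hp' heq.1
      rw [← hpk, ← hpk', this]
  calc M1.card + M2.card = K1.card + K2.card := by rw [hc1, hc2]
    _ = (K1 ∩ K2).card + (K1 ∪ K2).card := by
        rw [Finset.card_inter_add_card_union]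
    _ ≤ M3.card + z.length := add_le_add hinter hunion

lemma fbar_arith (N M L r r1 r2 a b c : ℝ)
    (hN0 : 0 < N) (hM0 : 0 < M) (hL0 : 0 < L)
    (e1 : a * (N + L) = N + L - 2 * r1) (e2 : b * (L + M) = L + M - 2 * r2)
    (e3 : c * (N + M) = N + M - 2 * r)
    (hkey : r1 + r2 ≤ r + L) (hr1N : r1 ≤ N) (hr1L : r1 ≤ L)
    (hr2M : r2 ≤ M) (hr2L : r2 ≤ L)
    (ha : a < 1 / 2) (hb : b < 1 / 2) :
    c ≤ ((N + L) / (N + M)) * a + ((L + M) / (N + M)) * b ∧ c ≤ a + b + 8 * a * b := by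
  have hNM : 0 < N + M := by linarith
  have hNL : 0 < N + L := by linarith
  have hLM : 0 < L + M := by linarith
  have h4r1 : N + L < 4 * r1 := by nlinarith [mul_pos (by linarith : (0:ℝ) < 1/2 - a) hNL]
  have h4r2 : L + M < 4 * r2 := by nlinarith [mul_pos (by linarith : (0:ℝ) < 1/2 - b) hLM]
  have ha0 : 0 ≤ a := by nlinarith [e1]
  have hb0 : 0 ≤ b := by nlinarith [e2]
  have hL3N : L < 3 * N := by linarith
  have hL3M : L < 3 * M := by linarith
  have h1 : c ≤ ((N + L) / (N + M)) * a + ((L + M) / (N + M)) * b := by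
    rw [div_mul_eq_mul_div, div_mul_eq_mul_div, ← add_div, le_div_iff₀ hNM]
    linarith
  refine ⟨h1, h1.trans ?_⟩
  rw [div_mul_eq_mul_div, div_mul_eq_mul_div, ← add_div, div_le_iff₀ hNM]
  have hA : L - N ≤ a * (N + L) := by linarith
  have hB : L - M ≤ b * (L + M) := by linarith
  nlinarith [mul_nonneg hb0 (sub_nonneg.mpr hA), mul_nonneg ha0 (sub_nonneg.mpr hB),
    mul_nonneg (mul_nonneg ha0 hb0) (by linarith : (0:ℝ) ≤ 7 * (N + M) - 2 * L)]

end FbarAux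

/-- Approximate triangle inequality for `f̄`: if `f̄(x,z) < 1/2` and `f̄(y,z) < 1/2`, then
`f̄(x,y) ≤ ((|x|+|z|)/(|x|+|y|))·f̄(x,z) + ((|z|+|y|)/(|x|+|y|))·f̄(z,y)` and
`f̄(x,y) ≤ f̄(x,z) + f̄(z,y) + 8·f̄(x,z)·f̄(z,y)`. -/
theorem fbar_approx_triangle {α : Type*} (x y z : List α)
    (hx : x ≠ []) (hy : y ≠ []) (hz : z ≠ [])
    (hxz : fbar x z < 1 / 2) (hyz : fbar y z < 1 / 2) :
    fbar x y ≤ (((x.length : ℝ) + (z.length : ℝ)) / ((x.length : ℝ) + (y.length : ℝ))) * fbar x z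
        + (((z.length : ℝ) + (y.length : ℝ)) / ((x.length : ℝ) + (y.length : ℝ))) * fbar z y ∧
      fbar x y ≤ fbar x z + fbar z y + 8 * fbar x z * fbar z y := by
  have hN0 : (0:ℝ) < (x.length : ℝ) := by exact_mod_cast List.length_pos_iff.mpr hx
  have hM0 : (0:ℝ) < (y.length : ℝ) := by exact_mod_cast List.length_pos_iff.mpr hy
  have hL0 : (0:ℝ) < (z.length : ℝ) := by exact_mod_cast List.length_pos_iff.mpr hz
  obtain ⟨M1, hM1, hc1⟩ := maxMatch_spec x z
  obtain ⟨M2, hM2, hc2⟩ := maxMatch_spec y z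
  obtain ⟨M3, hM3, hkeyN⟩ := comp_match hM1 hM2
  have hkey : ((maxMatch x z : ℝ)) + (maxMatch y z : ℝ) ≤ (maxMatch x y : ℝ) + (z.length : ℝ) := by
    have h3 : M3.card ≤ maxMatch x y := le_maxMatch hM3
    have : maxMatch x z + maxMatch y z ≤ maxMatch x y + z.length := by
      rw [← hc1, ← hc2]; omega
    exact_mod_cast this
  have hr1N : (maxMatch x z : ℝ) ≤ (x.length : ℝ) := by
    rw [← hc1]; exact_mod_cast card_le_left hM1
  have hr1L : (maxMatch x z : ℝ) ≤ (z.length : ℝ) := by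
    rw [← hc1]; exact_mod_cast card_le_right hM1
  have hr2M : (maxMatch y z : ℝ) ≤ (y.length : ℝ) := by
    rw [← hc2]; exact_mod_cast card_le_left hM2
  have hr2L : (maxMatch y z : ℝ) ≤ (z.length : ℝ) := by
    rw [← hc2]; exact_mod_cast card_le_right hM2
  have hcomm : (maxMatch z y : ℝ) = (maxMatch y z : ℝ) := by rw [maxMatch_comm z y]
  have hbyz : fbar z y < 1 / 2 := by
    rw [fbar, hcomm, add_comm ((z.length : ℝ)) ((y.length : ℝ))]
    rw [fbar] at hyz
    exact hyz
  have e1 : fbar x z * ((x.length : ℝ) + (z.length : ℝ))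
      = (x.length : ℝ) + (z.length : ℝ) - 2 * (maxMatch x z : ℝ) := by
    rw [fbar]; field_simp
  have e2 : fbar z y * ((z.length : ℝ) + (y.length : ℝ))
      = (z.length : ℝ) + (y.length : ℝ) - 2 * (maxMatch y z : ℝ) := by
    rw [fbar, hcomm]; field_simp
  have e3 : fbar x y * ((x.length : ℝ) + (y.length : ℝ))
      = (x.length : ℝ) + (y.length : ℝ) - 2 * (maxMatch x y : ℝ) := by
    rw [fbar]; field_simp
  have e2' : fbar z y * ((z.length : ℝ) + (y.length : ℝ))
      = (z.length : ℝ) + (y.length : ℝ) - 2 * (maxMatch y z : ℝ) := e2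
  have := fbar_arith (x.length : ℝ) (y.length : ℝ) (z.length : ℝ)
    (maxMatch x y : ℝ) (maxMatch x z : ℝ) (maxMatch y z : ℝ)
    (fbar x z) (fbar z y) (fbar x y)
    hN0 hM0 hL0 e1 e2' e3 hkey hr1N hr1L hr2M hr2L hxz hbyz
  exact this
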